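/- Let X be a real m × n matrix. Then the symmetric block matrix [[(X Xᵀ)^{1/2}, -X], [-Xᵀ, (Xᵀ X)^{1/2}]] is positive semidefinite; equivalently, the block matrix [[0, X],[Xᵀ, 0]] is bounded above in the Loewner order by the block-diagonal matrix Diag((X Xᵀ)^{1/2}, (Xᵀ X)^{1/2}). -/

import Mathlib

open Matrix

open scoped ComplexOrder in
/-- The square root of a positive semidefinite matrix, as defined in Mathlib (December 2024),
since removed from Mathlib. -/
noncomputable def Matrix.PosSemidef.sqrt {n : Type*} [Fintype n] [DecidableEq n] {𝕜 : Type*}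
    [RCLike 𝕜] {A : Matrix n n 𝕜} (hA : A.PosSemidef) : Matrix n n 𝕜 :=
  hA.1.eigenvectorUnitary.1 * diagonal ((↑) ∘ Real.sqrt ∘ hA.1.eigenvalues) *
  (star hA.1.eigenvectorUnitary : Matrix n n 𝕜)

open scoped MatrixOrder in
lemma Matrix.PosSemidef.sqrt_eq_cfcSqrt {k : Type*} [Fintype k] [DecidableEq k]
    {A : Matrix k k ℝ} (hA : A.PosSemidef) : hA.sqrt = CFC.sqrt A := by
  rw [CFC.sqrt_eq_cfc, cfc_nnreal_eq_real _ A, hA.1.cfc_eq]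
  simp only [IsHermitian.cfc, Unitary.conjStarAlgAut_apply, Matrix.PosSemidef.sqrt]
  congr 3
  ext i
  simp [Real.coe_sqrt, Real.coe_toNNReal', max_eq_left (hA.eigenvalues_nonneg i)]

open scoped MatrixOrder in
lemma Matrix.PosSemidef.posSemidef_sqrt {k : Type*} [Fintype k] [DecidableEq k]
    {A : Matrix k k ℝ} (hA : A.PosSemidef) : hA.sqrt.PosSemidef := by
  rw [hA.sqrt_eq_cfcSqrt]
  exact nonneg_iff_posSemidef.mp (CFC.sqrt_nonneg A)

open scoped MatrixOrder in
lemma Matrix.PosSemidef.eq_sqrt_of_sq_eq {k : Type*} [Fintype k] [DecidableEq k]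
    {A B : Matrix k k ℝ} (hA : A.PosSemidef) (hB : B.PosSemidef) (h : A ^ 2 = B) :
    A = hB.sqrt := by
  rw [hB.sqrt_eq_cfcSqrt, ← h, CFC.sqrt_sq A hA.nonneg]

open scoped MatrixOrder in
@[simp]
lemma Matrix.PosSemidef.sqrt_mul_self {k : Type*} [Fintype k] [DecidableEq k]
    {A : Matrix k k ℝ} (hA : A.PosSemidef) : hA.sqrt * hA.sqrt = A := by
  rw [hA.sqrt_eq_cfcSqrt, CFC.sqrt_mul_sqrt_self A hA.nonneg]

lemma sqrt_sq_sub_self_posSemidef {k : Type*} [Fintype k] [DecidableEq k]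
    {M : Matrix k k ℝ}
    (hM : M.IsHermitian) (h2 : (M ^ 2).PosSemidef) :
    (h2.sqrt - M).PosSemidef := by
  set U : Matrix k k ℝ := hM.eigenvectorUnitary.1 with hU
  set d : k → ℝ := hM.eigenvalues with hd
  have hspec : M = U * diagonal (RCLike.ofReal ∘ d) * (star U) := hM.spectral_theorem
  have hUU : (star U) * U = 1 := by
    have := hM.eigenvectorUnitary.2.1
    exact_mod_cast this
  have key : ∀ f g : k → ℝ, (U * diagonal f * star U) * (U * diagonal g * star U)
      = U * diagonal (fun i => f i * g i) * star U := by
    intro f g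
    simp only [Matrix.mul_assoc]
    rw [← Matrix.mul_assoc (star U) U, hUU, one_mul, ← Matrix.mul_assoc (diagonal f),
      diagonal_mul_diagonal]
  have keysub : ∀ f g : k → ℝ, (U * diagonal f * star U) - (U * diagonal g * star U)
      = U * diagonal (fun i => f i - g i) * star U := by
    intro f g
    rw [← Matrix.sub_mul, ← Matrix.mul_sub]
    congr 2
    rw [← diagonal_sub]
  set N : Matrix k k ℝ := U * diagonal (fun i => |d i|) * (star U) with hN
  have hNpsd : N.PosSemidef := by
    apply Matrix.PosSemidef.mul_mul_conjTranspose_same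
    exact posSemidef_diagonal_iff.mpr fun i => abs_nonneg _
  have hNsq : N ^ 2 = M ^ 2 := by
    rw [pow_two, pow_two, hspec, hN, key, key]
    congr 2
    ext i
    simp [abs_mul_abs_self]
  have heq : N = h2.sqrt := hNpsd.eq_sqrt_of_sq_eq h2 hNsq
  rw [← heq, hN, hspec, keysub]
  apply Matrix.PosSemidef.mul_mul_conjTranspose_same
  refine posSemidef_diagonal_iff.mpr fun i => ?_
  simp only [Function.comp_apply, RCLike.ofReal_real_eq_id, id]
  exact sub_nonneg.mpr (le_abs_self _)

lemma fromBlocks_diag_posSemidef {m n : ℕ} {A : Matrix (Fin m) (Fin m) ℝ}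
    {B : Matrix (Fin n) (Fin n) ℝ} (hA : A.PosSemidef) (hB : B.PosSemidef) :
    (Matrix.fromBlocks A 0 0 B).PosSemidef := by
  refine Matrix.posSemidef_iff_dotProduct_mulVec.mpr ⟨?_, ?_⟩
  · rw [Matrix.isHermitian_fromBlocks_iff]
    refine ⟨hA.1, ?_, rfl, hB.1⟩
    simp
  · intro x
    have h := hA.dotProduct_mulVec_nonneg (fun i => x (Sum.inl i))
    have h' := hB.dotProduct_mulVec_nonneg (fun j => x (Sum.inr j))
    simp only [dotProduct, Fintype.sum_sum_type, Matrix.mulVec, Matrix.fromBlocks] at *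
    convert add_nonneg h h' using 2 <;>
    · refine Finset.sum_congr rfl fun i _ => ?_
      simp [dotProduct, Fintype.sum_sum_type]

theorem block_sqrt_dominates {m n : ℕ} (X : Matrix (Fin m) (Fin n) ℝ)
    (hP : (X * Xᵀ).PosSemidef) (hQ : (Xᵀ * X).PosSemidef) :
    (Matrix.fromBlocks hP.sqrt (-X) (-Xᵀ) hQ.sqrt).PosSemidef := by
  classical
  set M : Matrix (Fin m ⊕ Fin n) (Fin m ⊕ Fin n) ℝ := Matrix.fromBlocks 0 X Xᵀ 0 with hMdef
  have hM : M.IsHermitian := by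
    rw [hMdef, Matrix.IsHermitian, Matrix.fromBlocks_conjTranspose]
    simp
  have hMsq : M ^ 2 = Matrix.fromBlocks (X * Xᵀ) 0 0 (Xᵀ * X) := by
    rw [pow_two, hMdef, Matrix.fromBlocks_multiply]
    simp
  have h2 : (M ^ 2).PosSemidef := by
    have h := Matrix.posSemidef_conjTranspose_mul_self M
    rwa [hM.eq, ← pow_two] at h
  have hD : (Matrix.fromBlocks hP.sqrt 0 0 hQ.sqrt).PosSemidef :=
    fromBlocks_diag_posSemidef hP.posSemidef_sqrt hQ.posSemidef_sqrt
  have hDsq : (Matrix.fromBlocks hP.sqrt 0 0 hQ.sqrt) ^ 2 = M ^ 2 := by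
    rw [pow_two, Matrix.fromBlocks_multiply, hMsq]
    simp
  have heq : Matrix.fromBlocks hP.sqrt 0 0 hQ.sqrt = h2.sqrt :=
    hD.eq_sqrt_of_sq_eq h2 hDsq
  have key := sqrt_sq_sub_self_posSemidef hM h2
  rw [← heq, hMdef] at key
  convert key using 1
  ext (i|j) (i'|j') <;> simp [Matrix.fromBlocks]
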